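/- Let X ⊆ Kⁿ be a nonempty set and let π : Kⁿ → K^d be an exhibition of affdir(X). Then the restriction of π to X is a bijection from X onto π(X), and for any bijection φ : X → Y with Y ⊆ Kⁿ, the following are equivalent: (1) φ is a risometry; (2) affdir(Y) = affdir(X) and the induced map ψ : π(X) → π(Y) defined by ψ(π(x)) = π(φ(x)) for all x ∈ X is a well-defined risometry. -/

import Mathlib

noncomputable section

open scoped Classical Pointwise

section Preamble

variable {K : Type*} [Field K] {Γ : Type*} [LinearOrderedCommGroupWithZero Γ]

instance (priority := 100) : OrderBot Γ where
  bot := 0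
  bot_le _ := zero_le'

/-- The max-valuation on `K^n`: `v(a) = maxᵢ v(aᵢ)`. -/
def vv (v : Valuation K Γ) {n : ℕ} (x : Fin n → K) : Γ :=
  Finset.univ.sup fun i => v (x i)

/-- `rvEq v x y` expresses `rv(x) = rv(y)` in `RV⁽ⁿ⁾ = Kⁿ/∼`, where
`x ∼ y` iff `v(x−y) < v(x)` or `x = y = 0`. -/
def rvEq (v : Valuation K Γ) {n : ℕ} (x y : Fin n → K) : Prop :=
  vv v (x - y) < vv v x ∨ (x = 0 ∧ y = 0)

/-- Balls in `K` (with `K` itself counting as a ball). -/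
def IsBall1 (v : Valuation K Γ) (B : Set K) : Prop :=
  B = Set.univ ∨ ∃ a : K, ∃ γ : Γ, γ ≠ 0 ∧
    (B = {x | v (x - a) < γ} ∨ B = {x | v (x - a) ≤ γ})

/-- Balls in `Kⁿ` (with `Kⁿ` itself counting as a ball). -/
def IsBall (v : Valuation K Γ) {n : ℕ} (B : Set (Fin n → K)) : Prop :=
  B = Set.univ ∨ ∃ a : Fin n → K, ∃ γ : Γ, γ ≠ 0 ∧
    (B = {x | vv v (x - a) < γ} ∨ B = {x | vv v (x - a) ≤ γ})

/-- Spherical completeness: every nonempty chain of balls in `K` has nonempty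
intersection. -/
def SphericallyComplete (v : Valuation K Γ) : Prop :=
  ∀ C : Set (Set K), C.Nonempty → (∀ B ∈ C, IsBall1 v B) → IsChain (· ⊆ ·) C →
    (⋂ B ∈ C, B).Nonempty

/-- The residue field `K̄` of the valuation ring `𝒪 = {x | v x ≤ 1}`. -/
def Kbar (v : Valuation K Γ) : Type _ :=
  IsLocalRing.ResidueField v.valuationSubring

instance (v : Valuation K Γ) : Field (Kbar v) :=
  inferInstanceAs (Field (IsLocalRing.ResidueField v.valuationSubring))

/-- The residue map `res : 𝒪 → K̄`, extended by the junk value `0` outside `𝒪`. -/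
def res' (v : Valuation K Γ) (x : K) : Kbar v :=
  if h : v x ≤ 1 then IsLocalRing.residue v.valuationSubring ⟨x, h⟩ else 0

/-- The coordinatewise residue map on `Kⁿ`. -/
def resv (v : Valuation K Γ) {n : ℕ} (x : Fin n → K) : Fin n → Kbar v :=
  fun i => res' v (x i)

/-- `res(S)` for a set `S ⊆ Kⁿ`: the set of residues of points of `S ∩ 𝒪ⁿ`. -/
def resSet (v : Valuation K Γ) {n : ℕ} (S : Set (Fin n → K)) : Set (Fin n → Kbar v) :=
  resv v '' {x ∈ S | ∀ i, v (x i) ≤ 1}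

/-- `dir(x) = res(K·x) ⊆ K̄ⁿ`. -/
def dirSet (v : Valuation K Γ) {n : ℕ} (x : Fin n → K) : Set (Fin n → Kbar v) :=
  resSet v {y | ∃ c : K, y = c • x}

/-- The coordinate projection `Kⁿ → K^d` selecting the coordinates `σ 0 < σ 1 < ⋯`. -/
def proj {A : Type*} {n d : ℕ} (σ : Fin d → Fin n) (x : Fin n → A) : Fin d → A :=
  fun k => x (σ k)

/-- `σ` (a strictly increasing selection of `d` of the `n` coordinates) is an
exhibition of the `K̄`-subspace `Ū ⊆ K̄ⁿ` if the corresponding coordinate projection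
`K̄ⁿ → K̄^d` restricts to an isomorphism from `Ū` onto `K̄^d`. -/
def IsExhibition (v : Valuation K Γ) {n d : ℕ} (σ : Fin d → Fin n)
    (Ubar : Submodule (Kbar v) (Fin n → Kbar v)) : Prop :=
  StrictMono σ ∧ Set.BijOn (proj σ) (Ubar : Set (Fin n → Kbar v)) Set.univ

/-- `affdir(C)`: the `K̄`-subspace of `K̄ⁿ` generated by all `dir(x − x')`, `x, x' ∈ C`. -/
def affdir (v : Valuation K Γ) {n : ℕ} (C : Set (Fin n → K)) :
    Submodule (Kbar v) (Fin n → Kbar v) :=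
  Submodule.span (Kbar v) (⋃ x ∈ C, ⋃ x' ∈ C, dirSet v (x - x'))

/-- A matrix has entries in the valuation ring `𝒪`. -/
def EntriesInO (v : Valuation K Γ) {n : ℕ} (M : Matrix (Fin n) (Fin n) K) : Prop :=
  ∀ i j, v (M i j) ≤ 1

/-- `M ∈ GLₙ(𝒪)`: `M` is invertible, with entries in `𝒪`, and its inverse also has
entries in `𝒪`. -/
def MemGLO (v : Valuation K Γ) {n : ℕ} (M : Matrix (Fin n) (Fin n) K) : Prop :=
  EntriesInO v M ∧ ∃ N : Matrix (Fin n) (Fin n) K,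
    M * N = 1 ∧ N * M = 1 ∧ EntriesInO v N

/-- The entrywise residue matrix of `M`. -/
def resM (v : Valuation K Γ) {n : ℕ} (M : Matrix (Fin n) (Fin n) K) :
    Matrix (Fin n) (Fin n) (Kbar v) :=
  fun i j => res' v (M i j)

/-- `DeltaLE v U W γ` expresses `Δ(U, W) ≤ γ`: for every `u ∈ U` there is `w ∈ W`
with `v(u − w) ≤ v(u)·γ`. -/
def DeltaLE (v : Valuation K Γ) {n : ℕ} (U W : Submodule K (Fin n → K)) (γ : Γ) : Prop :=
  ∀ u ∈ U, ∃ w ∈ W, vv v (u - w) ≤ vv v u * γ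

/-- `IsDelta v U W γ` expresses `Δ(U, W) = γ`: `γ` is the minimum of all admissible
bounds. -/
def IsDelta (v : Valuation K Γ) {n : ℕ} (U W : Submodule K (Fin n → K)) (γ : Γ) : Prop :=
  DeltaLE v U W γ ∧ ∀ δ : Γ, DeltaLE v U W δ → γ ≤ δ

end Preamble

section Aux

variable {K : Type*} [Field K] {Γ : Type*} [LinearOrderedCommGroupWithZero Γ]

lemma le_vv (v : Valuation K Γ) {n : ℕ} (x : Fin n → K) (i : Fin n) :
    v (x i) ≤ vv v x := by
  unfold vv
  exact Finset.le_sup (f := fun j => v (x j)) (Finset.mem_univ i)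

lemma vv_le_iff (v : Valuation K Γ) {n : ℕ} {x : Fin n → K} {γ : Γ} :
    vv v x ≤ γ ↔ ∀ i, v (x i) ≤ γ := by
  simp [vv, Finset.sup_le_iff]

lemma vv_lt_iff (v : Valuation K Γ) {n : ℕ} {x : Fin n → K} {γ : Γ} (hγ : γ ≠ 0) :
    vv v x < γ ↔ ∀ i, v (x i) < γ := by
  rw [vv, Finset.sup_lt_iff (show (⊥ : Γ) < γ from lt_of_le_of_lt bot_le (zero_lt_iff.mpr hγ))]
  simp

lemma vv_eq_zero (v : Valuation K Γ) {n : ℕ} {x : Fin n → K} :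
    vv v x = 0 ↔ x = 0 := by
  constructor
  · intro h
    funext i
    have := (le_vv v x i).trans h.le
    simpa using le_zero_iff.mp this
  · rintro rfl
    apply le_antisymm _ zero_le'
    exact Finset.sup_le fun i _ => by simp

lemma vv_sub_le (v : Valuation K Γ) {n : ℕ} (x y : Fin n → K) :
    vv v (x - y) ≤ max (vv v x) (vv v y) := by
  refine Finset.sup_le fun i _ => ?_
  exact (v.map_sub (x i) (y i)).trans (max_le_max (le_vv v x i) (le_vv v y i))

lemma vv_add_le (v : Valuation K Γ) {n : ℕ} (x y : Fin n → K) :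
    vv v (x + y) ≤ max (vv v x) (vv v y) := by
  refine Finset.sup_le fun i _ => ?_
  exact (v.map_add (x i) (y i)).trans (max_le_max (le_vv v x i) (le_vv v y i))

lemma vv_smul (v : Valuation K Γ) {n : ℕ} (c : K) (x : Fin n → K) :
    vv v (c • x) = v c * vv v x := by
  have hmono : Monotone (fun γ : Γ => v c * γ) := fun p q h => mul_le_mul_right h (v c)
  have hsup := Finset.comp_sup_eq_sup_comp (s := (Finset.univ : Finset (Fin n)))
    (f := fun i => v (x i)) (fun γ : Γ => v c * γ)
    (fun a b => by exact hmono.map_max)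
    (show v c * (⊥ : Γ) = ⊥ from by
      have hb : (⊥ : Γ) = 0 := le_antisymm bot_le zero_le'
      rw [hb]; exact mul_zero _)
  show Finset.univ.sup (fun i => v ((c • x) i)) = v c * Finset.univ.sup fun i => v (x i)
  have e : (fun i => v ((c • x) i)) = ((fun γ : Γ => v c * γ) ∘ fun i => v (x i)) := by
    funext i; simp [map_mul]
  rw [e, ← hsup]

lemma vv_neg (v : Valuation K Γ) {n : ℕ} (x : Fin n → K) :
    vv v (-x) = vv v x := by
  simp only [vv]
  congr 1
  funext i
  simp

lemma proj_sub {n d : ℕ} (σ : Fin d → Fin n) (x y : Fin n → K) :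
    proj σ (x - y) = proj σ x - proj σ y := rfl

lemma vv_proj_le (v : Valuation K Γ) {n d : ℕ} (σ : Fin d → Fin n) (x : Fin n → K) :
    vv v (proj σ x) ≤ vv v x :=
  Finset.sup_le fun k _ => le_vv v x (σ k)

lemma res'_eq_res (v : Valuation K Γ) {a : K} (h : v a ≤ 1) :
    res' v a = IsLocalRing.residue v.valuationSubring ⟨a, h⟩ := dif_pos h

lemma res'_eq_zero (v : Valuation K Γ) {a : K} (h : v a < 1) : res' v a = 0 := by
  rw [res'_eq_res v h.le]
  refine (IsLocalRing.residue_eq_zero_iff _).mpr ?_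
  rw [IsLocalRing.mem_maximalIdeal, mem_nonunits_iff]
  intro hu
  obtain ⟨b, hb⟩ := isUnit_iff_exists_inv.mp hu
  have hb1 : v (b : K) ≤ 1 := b.2
  have hab : a * (b : K) = 1 := by
    have := congrArg (fun z : v.valuationSubring => (z : K)) hb
    simpa using this
  have h1 : v a * v (b : K) = 1 := by rw [← v.map_mul, hab, v.map_one]
  have : (1 : Γ) < 1 := by
    calc (1 : Γ) = v a * v (b : K) := h1.symm
      _ ≤ v a * 1 := mul_le_mul_right hb1 _
      _ = v a := mul_one _
      _ < 1 := h
  exact lt_irrefl _ this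

lemma res'_ne_zero (v : Valuation K Γ) {a : K} (h : v a = 1) : res' v a ≠ 0 := by
  rw [res'_eq_res v h.le]
  intro h0
  have hmem := (IsLocalRing.residue_eq_zero_iff _).mp h0
  rw [IsLocalRing.mem_maximalIdeal, mem_nonunits_iff] at hmem
  apply hmem
  have ha0 : a ≠ 0 := by
    intro h0'; rw [h0', v.map_zero] at h; exact zero_ne_one h
  have hinv : v a⁻¹ ≤ 1 := by rw [map_inv₀, h]; simp
  exact isUnit_iff_exists_inv.mpr ⟨⟨a⁻¹, hinv⟩, Subtype.ext (mul_inv_cancel₀ ha0)⟩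

lemma res'_sub (v : Valuation K Γ) {a b : K} (ha : v a ≤ 1) (hb : v b ≤ 1) :
    res' v (a - b) = res' v a - res' v b := by
  have hab : v (a - b) ≤ 1 := (v.map_sub a b).trans (max_le ha hb)
  rw [res'_eq_res v ha, res'_eq_res v hb, res'_eq_res v hab]
  exact map_sub (IsLocalRing.residue v.valuationSubring) ⟨a, ha⟩ ⟨b, hb⟩

lemma res'_congr (v : Valuation K Γ) {a b : K} (ha : v a ≤ 1) (hb : v b ≤ 1)
    (h : v (a - b) < 1) : res' v a = res' v b := by
  have hs := res'_sub v ha hb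
  rw [res'_eq_zero v h] at hs
  exact sub_eq_zero.mp hs.symm

lemma vv_eq_of_sub_lt (v : Valuation K Γ) {n : ℕ} {a b : Fin n → K}
    (h : vv v (a - b) < vv v a) : vv v b = vv v a := by
  have hb : vv v b ≤ vv v a := by
    calc vv v b = vv v (a - (a - b)) := by rw [sub_sub_cancel]
      _ ≤ max (vv v a) (vv v (a - b)) := vv_sub_le v _ _
      _ = vv v a := max_eq_left h.le
  rcases hb.lt_or_eq with hlt | heq
  · exfalso
    have e : a = b - -(a - b) := by ring
    have hle : vv v a ≤ max (vv v b) (vv v (a - b)) := by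
      calc vv v a = vv v (b - -(a - b)) := by rw [← e]
        _ ≤ max (vv v b) (vv v (-(a - b))) := vv_sub_le v _ _
        _ = max (vv v b) (vv v (a - b)) := by rw [vv_neg]
    exact absurd hle (not_le.mpr (max_lt hlt h))
  · exact heq

lemma rvEq_symm (v : Valuation K Γ) {n : ℕ} {a b : Fin n → K} (h : rvEq v a b) :
    rvEq v b a := by
  rcases h with h | ⟨h1, h2⟩
  · left
    have hba : vv v b = vv v a := vv_eq_of_sub_lt v h
    have hneg : vv v (b - a) = vv v (a - b) := by
      rw [← vv_neg v (b - a)]; congr 1; ring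
    rw [hneg, hba]
    exact h
  · right; exact ⟨h2, h1⟩

lemma resv_smul_sub_mem_affdir (v : Valuation K Γ) {n : ℕ} {C : Set (Fin n → K)}
    {x x' : Fin n → K} (hx : x ∈ C) (hx' : x' ∈ C) (c : K)
    (h : vv v (c • (x - x')) ≤ 1) :
    resv v (c • (x - x')) ∈ affdir v C := by
  apply Submodule.subset_span
  refine Set.mem_iUnion.mpr ⟨x, Set.mem_iUnion.mpr ⟨hx, Set.mem_iUnion.mpr ⟨x',
    Set.mem_iUnion.mpr ⟨hx', ?_⟩⟩⟩⟩
  exact ⟨c • (x - x'), ⟨⟨c, rfl⟩, fun i => (le_vv v _ i).trans h⟩, rfl⟩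

lemma vv_proj_eq (v : Valuation K Γ) {n d : ℕ} {X : Set (Fin n → K)}
    {σ : Fin d → Fin n} (hσ : IsExhibition v σ (affdir v X)) {z : Fin n → K}
    (hz : ∀ c : K, vv v (c • z) ≤ 1 → resv v (c • z) ∈ affdir v X) :
    vv v (proj σ z) = vv v z := by
  refine le_antisymm (vv_proj_le v σ z) ?_
  by_contra hcon
  push_neg at hcon
  have hz0 : vv v z ≠ 0 := by
    intro h0
    rw [h0] at hcon
    exact lt_irrefl _ (lt_of_le_of_lt zero_le' hcon)
  have hne : (Finset.univ : Finset (Fin n)).Nonempty := by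
    by_contra he
    rw [Finset.not_nonempty_iff_eq_empty] at he
    refine hz0 ?_
    unfold vv
    rw [he, Finset.sup_empty]
    exact le_antisymm bot_le zero_le'
  obtain ⟨i₀, _, hi₀⟩ := Finset.exists_mem_eq_sup Finset.univ hne (fun i => v (z i))
  have hvz : v (z i₀) = vv v z := hi₀.symm
  have hzi0 : z i₀ ≠ 0 := by
    intro h0; rw [h0, v.map_zero] at hvz; exact hz0 hvz.symm
  set c := (z i₀)⁻¹ with hc
  have hvc : v c = (vv v z)⁻¹ := by rw [hc, map_inv₀, hvz]
  have hcz : vv v (c • z) = 1 := by rw [vv_smul, hvc, inv_mul_cancel₀ hz0]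
  have hmem : resv v (c • z) ∈ affdir v X := hz c hcz.le
  have hproj0 : proj σ (resv v (c • z)) = (0 : Fin d → Kbar v) := by
    funext k
    have h1 : vv v (c • proj σ z) < 1 := by
      rw [vv_smul, hvc, ← inv_mul_cancel₀ hz0]
      exact mul_lt_mul_of_pos_left hcon (zero_lt_iff.mpr (inv_ne_zero hz0))
    have hlt : v ((c • proj σ z) k) < 1 := (vv_lt_iff v one_ne_zero).mp h1 k
    have : v ((c • z) (σ k)) < 1 := by simpa [proj] using hlt
    exact res'_eq_zero v this
  have heq : resv v (c • z) = 0 :=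
    hσ.2.injOn hmem ((affdir v X).zero_mem) (by rw [hproj0]; rfl)
  have hne0 : res' v ((c • z) i₀) ≠ 0 := by
    apply res'_ne_zero
    show v (c * z i₀) = 1
    rw [v.map_mul, hvc, hvz, inv_mul_cancel₀ hz0]
  exact hne0 (congrFun heq i₀)

lemma dirSet_congr (v : Valuation K Γ) {n : ℕ} {a b : Fin n → K} (h : rvEq v a b) :
    dirSet v a = dirSet v b := by
  have main : ∀ a b : Fin n → K, rvEq v a b → dirSet v a ⊆ dirSet v b := by
    intro a b h y hy
    rcases h with h | ⟨h1, h2⟩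
    · obtain ⟨w, ⟨⟨c, rfl⟩, hw⟩, rfl⟩ := hy
      rcases eq_or_ne c 0 with rfl | hc0
      · refine ⟨(0 : K) • b, ⟨⟨0, rfl⟩, fun i => by simp⟩, ?_⟩
        simp only [zero_smul]
      · have hvc0 : v c ≠ 0 := by rwa [v.ne_zero_iff]
        have hca : vv v (c • a) ≤ 1 := vv_le_iff v |>.mpr hw
        have hvba : vv v b = vv v a := vv_eq_of_sub_lt v h
        have hcb : vv v (c • b) ≤ 1 := by
          rw [vv_smul, hvba, ← vv_smul]; exact hca
        have hres : resv v (c • a) = resv v (c • b) := by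
          funext i
          refine res'_congr v ((le_vv v _ i).trans hca) ((le_vv v _ i).trans hcb) ?_
          have he : (c • a) i - (c • b) i = (c • (a - b)) i := by simp [smul_sub, mul_sub]
          rw [he]
          calc v ((c • (a - b)) i) ≤ vv v (c • (a - b)) := le_vv v _ i
            _ = v c * vv v (a - b) := vv_smul v c _
            _ < v c * vv v a := mul_lt_mul_of_pos_left h (zero_lt_iff.mpr hvc0)
            _ = vv v (c • a) := (vv_smul v c a).symm
            _ ≤ 1 := hca
        rw [hres]
        exact ⟨c • b, ⟨⟨c, rfl⟩, fun i => (le_vv v _ i).trans hcb⟩, rfl⟩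
    · subst h1; subst h2; exact hy
  exact le_antisymm (main a b h) (main b a (rvEq_symm v h))

end Aux


variable {K : Type*} [Field K] {Γ : Type*} [LinearOrderedCommGroupWithZero Γ]

/-- if `π` is an exhibition of `affdir X`, then `π` is injective on
`X`, and a bijection `φ : X → Y` is a risometry iff `affdir Y = affdir X` and the
induced map `ψ : π(X) → π(Y)` (with `ψ(π x) = π(φ x)`) is a well-defined risometry. -/
theorem risometry_iff_projected_risometry
    (v : Valuation K Γ) {n d : ℕ}
    (X : Set (Fin n → K)) (hX : X.Nonempty)
    (σ : Fin d → Fin n) (hσ : IsExhibition v σ (affdir v X)) :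
    Set.InjOn (proj σ) X ∧
    ∀ (Y : Set (Fin n → K)) (φ : (Fin n → K) → Fin n → K),
      Set.BijOn φ X Y →
      ((∀ x ∈ X, ∀ x' ∈ X, rvEq v (φ x - φ x') (x - x')) ↔
        (affdir v Y = affdir v X ∧
          ∃ ψ : (Fin d → K) → Fin d → K,
            (∀ x ∈ X, ψ (proj σ x) = proj σ (φ x)) ∧
            ∀ p ∈ proj σ '' X, ∀ p' ∈ proj σ '' X, rvEq v (ψ p - ψ p') (p - p'))) := by
  classical
  have keyX : ∀ x ∈ X, ∀ x' ∈ X, vv v (proj σ (x - x')) = vv v (x - x') := by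
    intro x hx x' hx'
    exact vv_proj_eq v hσ (fun c hc => resv_smul_sub_mem_affdir v hx hx' c hc)
  have hinj : Set.InjOn (proj σ) X := by
    intro x hx x' hx' hpp
    have h0 : vv v (x - x') = 0 := by
      rw [← keyX x hx x' hx', proj_sub, hpp, sub_self]
      exact (vv_eq_zero v).mpr rfl
    exact sub_eq_zero.mp ((vv_eq_zero v).mp h0)
  refine ⟨hinj, ?_⟩
  intro Y φ hbij
  constructor
  · intro hrv
    constructor
    · -- affdir Y = affdir X
      unfold affdir
      congr 1
      rw [← hbij.image_eq]
      ext t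
      simp only [Set.mem_iUnion, Set.mem_image, exists_prop]
      constructor
      · rintro ⟨y, ⟨x, hx, rfl⟩, y', ⟨x', hx', rfl⟩, ht⟩
        exact ⟨x, hx, x', hx',
          by rwa [dirSet_congr v (hrv x hx x' hx')] at ht⟩
      · rintro ⟨x, hx, x', hx', ht⟩
        exact ⟨φ x, ⟨x, hx, rfl⟩, φ x', ⟨x', hx', rfl⟩,
          by rwa [dirSet_congr v (hrv x hx x' hx')]⟩
    · set ψ : (Fin d → K) → Fin d → K :=
        fun p => proj σ (φ (Function.invFunOn (proj σ) X p)) with hψdef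
      have hψeq : ∀ x ∈ X, ψ (proj σ x) = proj σ (φ x) := by
        intro x hx
        have hex : ∃ a ∈ X, proj σ a = proj σ x := ⟨x, hx, rfl⟩
        have h1 : Function.invFunOn (proj σ) X (proj σ x) = x :=
          hinj (Function.invFunOn_mem hex) hx (Function.invFunOn_eq hex)
        simp only [hψdef, h1]
      refine ⟨ψ, hψeq, ?_⟩
      rintro p ⟨x, hx, rfl⟩ p' ⟨x', hx', rfl⟩
      rw [hψeq x hx, hψeq x' hx']
      rcases hrv x hx x' hx' with h | ⟨h1, h2⟩
      · left
        have e1 : proj σ (φ x) - proj σ (φ x') - (proj σ x - proj σ x')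
            = proj σ (φ x - φ x' - (x - x')) := rfl
        have hstep : vv v (proj σ (φ x - φ x' - (x - x')))
            < vv v (proj σ x - proj σ x') := by
          calc vv v (proj σ (φ x - φ x' - (x - x')))
              ≤ vv v (φ x - φ x' - (x - x')) := vv_proj_le v σ _
            _ < vv v (φ x - φ x') := h
            _ = vv v (x - x') := (vv_eq_of_sub_lt v h).symm
            _ = vv v (proj σ (x - x')) := (keyX x hx x' hx').symm
            _ = vv v (proj σ x - proj σ x') := by rw [proj_sub]
        have e4 : (proj σ x - proj σ x') - (proj σ (φ x) - proj σ (φ x'))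
            = -(proj σ (φ x - φ x' - (x - x'))) := by rw [← e1]; ring
        have hsub : vv v ((proj σ x - proj σ x') - (proj σ (φ x) - proj σ (φ x')))
            < vv v (proj σ x - proj σ x') := by
          rw [e4, vv_neg]; exact hstep
        have heq2 : vv v (proj σ (φ x) - proj σ (φ x'))
            = vv v (proj σ x - proj σ x') := vv_eq_of_sub_lt v hsub
        rw [e1, heq2]
        exact hstep
      · right
        constructor
        · rw [← proj_sub σ (φ x) (φ x'), h1]; rfl
        · rw [← proj_sub σ x x', h2]; rfl
  · rintro ⟨hA, ψ, hψeq, hψrv⟩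
    intro x hx x' hx'
    have hp := hψrv (proj σ x) ⟨x, hx, rfl⟩ (proj σ x') ⟨x', hx', rfl⟩
    rw [hψeq x hx, hψeq x' hx'] at hp
    rcases hp with h | ⟨h1, h2⟩
    · left
      have e1 : proj σ (φ x) - proj σ (φ x') - (proj σ x - proj σ x')
          = proj σ (φ x - φ x' - (x - x')) := rfl
      have heqp : vv v (proj σ x - proj σ x') = vv v (proj σ (φ x) - proj σ (φ x')) :=
        vv_eq_of_sub_lt v h
      rw [e1, ← heqp] at h
      have hxx' : vv v (proj σ x - proj σ x') = vv v (x - x') := by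
        rw [← proj_sub σ x x']
        exact keyX x hx x' hx'
      rw [hxx'] at h
      -- h : vv v (proj σ (φ x - φ x' - (x - x'))) < vv v (x - x')
      set u := φ x - φ x' - (x - x') with hu
      suffices hclaim : vv v u < vv v (x - x') by
        have e5 : (x - x') - (φ x - φ x') = -u := by rw [hu]; ring
        have hsub : vv v ((x - x') - (φ x - φ x')) < vv v (x - x') := by
          rw [e5, vv_neg]; exact hclaim
        have heq3 : vv v (φ x - φ x') = vv v (x - x') := vv_eq_of_sub_lt v hsub
        rw [heq3]
        exact hclaim
      by_contra hcon
      push_neg at hcon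
      have hmem : ∀ c : K, vv v (c • u) ≤ 1 → resv v (c • u) ∈ affdir v X := by
        intro c hc
        have hcxx : vv v (c • (x - x')) ≤ 1 := by
          rw [vv_smul] at hc ⊢
          exact le_trans (mul_le_mul_right hcon (v c)) hc
        have e0 : u + (x - x') = φ x - φ x' := by rw [hu]; ring
        have e2 : c • (φ x - φ x') = c • u + c • (x - x') := by
          rw [← e0, smul_add]
        have hcφ : vv v (c • (φ x - φ x')) ≤ 1 := by
          rw [e2]
          exact le_trans (vv_add_le v _ _) (max_le hc hcxx)
        have e3 : c • u = c • (φ x - φ x') - c • (x - x') := by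
          rw [hu, smul_sub]
        have hres : resv v (c • u)
            = resv v (c • (φ x - φ x')) - resv v (c • (x - x')) := by
          funext i
          calc resv v (c • u) i
              = res' v ((c • (φ x - φ x')) i - (c • (x - x')) i) := by rw [e3]; rfl
            _ = res' v ((c • (φ x - φ x')) i) - res' v ((c • (x - x')) i) :=
                res'_sub v ((le_vv v _ i).trans hcφ) ((le_vv v _ i).trans hcxx)
        have m1 : resv v (c • (φ x - φ x')) ∈ affdir v X := by
          rw [← hA]
          exact resv_smul_sub_mem_affdir v (hbij.mapsTo hx) (hbij.mapsTo hx') c hcφ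
        have m2 : resv v (c • (x - x')) ∈ affdir v X :=
          resv_smul_sub_mem_affdir v hx hx' c hcxx
        rw [hres]
        exact Submodule.sub_mem _ m1 m2
      have hpeq : vv v (proj σ u) = vv v u := vv_proj_eq v hσ hmem
      have hlt : vv v (proj σ u) < vv v u := lt_of_lt_of_le h hcon
      rw [hpeq] at hlt
      exact absurd hlt (lt_irrefl _)
    · have hxx : x = x' := hinj hx hx' (sub_eq_zero.mp h2)
      subst hxx
      right
      exact ⟨sub_self _, sub_self _⟩


end
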